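/- A finite abelian 2-group G satisfies α(G) = 1/2 if and only if G ≅ (Z/2)^n × Z/8 for some n ∈ ℕ. -/

import Mathlib

open Finset Subgroup

/-- `α(G) = |L₁(G)| / |G|`, where `L₁(G)` is the set of cyclic subgroups of `G`. -/
noncomputable def alpha (G : Type*) [Group G] : ℚ :=
  (Nat.card {H : Subgroup G // IsCyclic H} : ℚ) / (Nat.card G : ℚ)


lemma sum_two_pow (n : ℕ) : ∑ i ∈ range n, 2 ^ i = 2 ^ n - 1 := by
  induction n with
  | zero => simp
  | succ n ih =>
    rw [Finset.sum_range_succ, ih, pow_succ]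
    have : 1 ≤ 2 ^ n := Nat.one_le_two_pow
    omega

lemma geo (a b : ℕ) : ∑ k ∈ Finset.Ico a b, 2 ^ (b - 1 - k) = 2 ^ (b - a) - 1 := by
  rcases le_or_gt a b with h | h
  · rw [Finset.sum_Ico_eq_sum_range, ← Finset.sum_range_reflect, ← sum_two_pow (b - a)]
    apply Finset.sum_congr rfl
    intro i hi
    rw [Finset.mem_range] at hi
    congr 1
    omega
  · rw [Finset.Ico_eq_empty (by omega), Finset.sum_empty]
    have : b - a = 0 := by omega
    rw [this]; simp

lemma two_pow_big (m : ℕ) (hm : 4 ≤ m) : m + 1 < 2 ^ (m - 1) := by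
  induction m with
  | zero => omega
  | succ n ih =>
    rcases Nat.lt_or_ge n 4 with h | h
    · interval_cases n <;> simp_all
    · have h1 := ih (by omega)
      have h2 : 2 ^ (n - 1) * 2 = 2 ^ (n + 1 - 1) := by
        rw [← pow_succ]; congr 1; omega
      omega

lemma arith1 (N j : ℕ) (hN : 1 ≤ N) (hj : j ≤ N) :
    (2 ^ j).totient * (1 + ∑ k ∈ Finset.Ico 1 N, if j ≤ k then 2 ^ (N - 1 - k) else 0)
      = 2 ^ (N - 1) := by
  rcases Nat.eq_zero_or_pos j with rfl | hjpos
  · simp only [pow_zero, Nat.totient_one, one_mul, Nat.zero_le, if_true]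
    rw [geo 1 N]
    have h1 : 1 ≤ 2 ^ (N - 1) := Nat.one_le_two_pow
    omega
  · have hfilter : ∀ k ∈ Finset.Ico 1 N, ¬ j ≤ k → (2:ℕ) ^ (N - 1 - k) = 2 ^ (N-1-k) := by
      intros; rfl
    rw [Finset.sum_ite, Finset.sum_const_zero, add_zero]
    have : (Finset.Ico 1 N).filter (fun k => j ≤ k) = Finset.Ico j N := by
      ext k
      simp only [Finset.mem_filter, Finset.mem_Ico]
      omega
    rw [this, geo j N, Nat.totient_prime_pow Nat.prime_two hjpos]
    have h1 : 1 ≤ 2 ^ (N - j) := Nat.one_le_two_pow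
    have : 1 + (2 ^ (N - j) - 1) = 2 ^ (N - j) := by omega
    rw [this]
    have h2 : 2 ^ (j-1) * (2 - 1) * 2 ^ (N - j) = 2 ^ (j - 1) * 2 ^ (N - j) := by ring_nf
    rw [h2, ← pow_add]
    congr 1
    omega

lemma prod_eq_two_pow_card {ι : Type*} (s : Finset ι) (f : ι → ℕ)
    (h2 : ∀ i ∈ s, 2 ≤ f i) (hp : ∏ i ∈ s, f i = 2 ^ s.card) :
    ∀ i ∈ s, f i = 2 := by
  by_contra hcon
  push_neg at hcon
  obtain ⟨j, hj, hne⟩ := hcon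
  classical
  have h3 : 3 ≤ f j := by have := h2 j hj; omega
  have hprod : ∏ i ∈ s, f i = f j * ∏ i ∈ s.erase j, f i := by
    rw [Finset.mul_prod_erase s f hj]
  have hge : 2 ^ (s.erase j).card ≤ ∏ i ∈ s.erase j, f i := by
    rw [← Finset.prod_const]
    apply Finset.prod_le_prod
    · intros; omega
    · intro i hi; exact h2 i (Finset.mem_of_mem_erase hi)
  have hcard : (s.erase j).card = s.card - 1 := Finset.card_erase_of_mem hj
  have hcardpos : 1 ≤ s.card := Finset.card_pos.mpr ⟨j, hj⟩
  have : 2 ^ s.card = 2 * 2 ^ (s.card - 1) := by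
    rw [← pow_succ']
    congr 1; omega
  have hlt : 2 ^ s.card < ∏ i ∈ s, f i := by
    rw [hprod, this]
    calc 2 * 2 ^ (s.card - 1) < 3 * 2 ^ (s.card - 1) := by
          have : (0:ℕ) < 2 ^ (s.card - 1) := Nat.pow_pos (by norm_num)
          omega
      _ ≤ f j * ∏ i ∈ s.erase j, f i := by
          apply Nat.mul_le_mul h3
          rw [← hcard]; exact hge
  omega


lemma isCyclic_zpowers {G : Type*} [Group G] (g : G) : IsCyclic (zpowers g) := by
  refine ⟨⟨⟨g, mem_zpowers g⟩, ?_⟩⟩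
  rintro ⟨x, hx⟩
  obtain ⟨k, hk⟩ := mem_zpowers_iff.mp hx
  exact ⟨k, Subtype.ext (by simpa using hk)⟩

lemma zpowers_eq_iff {G : Type*} [Group G] [Finite G] {H : Subgroup G} (g : G) :
    zpowers g = H ↔ g ∈ H ∧ orderOf g = Nat.card H := by
  constructor
  · rintro rfl
    exact ⟨mem_zpowers g, (Nat.card_zpowers g).symm⟩
  · rintro ⟨hg, hord⟩
    have hle : zpowers g ≤ H := zpowers_le.mpr hg
    exact Subgroup.eq_of_le_of_card_ge hle (by rw [← hord, ← Nat.card_zpowers g])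

open scoped Classical in
lemma sum_phi {G : Type*} [Group G] [Fintype G] (d : ℕ) :
    Nat.card {g : G // g ^ d = 1}
      = ∑ H ∈ univ.filter fun H : Subgroup G => IsCyclic H ∧ Nat.card H ∣ d,
          (Nat.card (H : Subgroup G)).totient := by
  rw [Nat.card_eq_fintype_card, Fintype.card_subtype]
  rw [Finset.card_eq_sum_card_fiberwise (f := fun g : G => zpowers g)
    (t := univ.filter fun H : Subgroup G => IsCyclic H ∧ Nat.card H ∣ d)
    (fun g hg => by
      simp only [Finset.mem_coe, Finset.mem_filter, Finset.mem_univ, true_and] at hg ⊢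
      refine ⟨_root_.isCyclic_zpowers g, ?_⟩
      rw [Nat.card_zpowers]
      exact orderOf_dvd_iff_pow_eq_one.mpr hg)]
  refine Finset.sum_congr rfl fun H hH => ?_
  simp only [Finset.mem_filter, Finset.mem_univ, true_and] at hH
  obtain ⟨hcyc, hdvd⟩ := hH
  have hfib : (univ.filter fun g : G => g ^ d = 1).filter (fun g => zpowers g = H)
      = univ.filter fun g : G => zpowers g = H := by
    rw [Finset.filter_filter]
    apply Finset.filter_congr
    intro g _
    constructor
    · rintro ⟨_, h⟩; exact h
    · intro h
      refine ⟨?_, h⟩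
      have h2 : orderOf g = Nat.card H := ((zpowers_eq_iff g).mp h).2
      exact orderOf_dvd_iff_pow_eq_one.mp (h2 ▸ hdvd)
  rw [hfib]
  haveI := hcyc
  rw [Nat.card_eq_fintype_card (α := H),
    ← IsCyclic.card_orderOf_eq_totient (α := H) (d := Fintype.card H) dvd_rfl]
  refine Finset.card_bij'
    (i := fun g hg => ⟨g, ((zpowers_eq_iff g).mp (by simpa using hg)).1⟩)
    (j := fun h _ => (h : G)) ?_ ?_ ?_ ?_
  · intro g hg
    simp only [Finset.mem_filter, Finset.mem_univ, true_and] at hg ⊢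
    have := ((zpowers_eq_iff g).mp hg).2
    rw [Subgroup.orderOf_mk, this, Nat.card_eq_fintype_card]
  · intro h hh
    simp only [Finset.mem_coe, Finset.mem_filter, Finset.mem_univ, true_and] at hh ⊢
    rw [zpowers_eq_iff]
    refine ⟨h.2, ?_⟩
    rw [Subgroup.orderOf_coe, hh, Nat.card_eq_fintype_card]
  · intro g hg; rfl
  · intro h hh; rfl

open scoped Classical in
lemma ident {G : Type*} [Group G] [Fintype G] (N : ℕ) (hG : Nat.card G = 2 ^ N) (hN : 1 ≤ N) :
    2 ^ (N - 1) * Nat.card {H : Subgroup G // IsCyclic H}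
      = 2 ^ N + ∑ k ∈ Finset.Ico 1 N, 2 ^ (N - 1 - k) * Nat.card {g : G // g ^ 2 ^ k = 1} := by
  set C := univ.filter (fun H : Subgroup G => IsCyclic H) with hC
  have hcards : Nat.card {H : Subgroup G // IsCyclic H} = C.card := by
    rw [Nat.card_eq_fintype_card, Fintype.card_subtype]
  have ht : ∀ k : ℕ, Nat.card {g : G // g ^ 2 ^ k = 1}
      = ∑ H ∈ C, (if Nat.card (H : Subgroup G) ∣ 2 ^ k
          then (Nat.card (H : Subgroup G)).totient else 0) := by
    intro k
    rw [sum_phi (2 ^ k), ← Finset.sum_filter]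
    congr 1
    rw [hC, Finset.filter_filter]
  have htop : (2 : ℕ) ^ N = ∑ H ∈ C, (Nat.card (H : Subgroup G)).totient := by
    have h1 : Nat.card {g : G // g ^ 2 ^ N = 1} = 2 ^ N := by
      rw [← hG]
      apply Nat.card_congr
      exact Equiv.subtypeUnivEquiv fun g => pow_card_eq_one'
    rw [← h1, ht N]
    refine Finset.sum_congr rfl fun H hH => ?_
    rw [if_pos]
    rw [← hG]
    exact Subgroup.card_subgroup_dvd_card H
  have per : ∀ H ∈ C, (Nat.card (H : Subgroup G)).totient
      + ∑ k ∈ Finset.Ico 1 N, 2 ^ (N - 1 - k) *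
          (if Nat.card (H : Subgroup G) ∣ 2 ^ k then (Nat.card (H : Subgroup G)).totient else 0)
      = 2 ^ (N - 1) := by
    intro H hH
    obtain ⟨j, hjle, hcard⟩ :=
      (Nat.dvd_prime_pow Nat.prime_two).mp (hG ▸ Subgroup.card_subgroup_dvd_card H)
    rw [hcard, ← arith1 N j hN hjle, mul_add, mul_one, Finset.mul_sum]
    congr 1
    refine Finset.sum_congr rfl fun k hk => ?_
    have : (2 : ℕ) ^ j ∣ 2 ^ k ↔ j ≤ k := Nat.pow_dvd_pow_iff_le_right (by norm_num)
    simp only [this]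
    split <;> simp [mul_comm]
  rw [hcards]
  calc 2 ^ (N - 1) * C.card = ∑ _H ∈ C, 2 ^ (N - 1) := by
        rw [Finset.sum_const, smul_eq_mul, mul_comm]
    _ = ∑ H ∈ C, ((Nat.card (H : Subgroup G)).totient
          + ∑ k ∈ Finset.Ico 1 N, 2 ^ (N - 1 - k) *
            (if Nat.card (H : Subgroup G) ∣ 2 ^ k then (Nat.card (H : Subgroup G)).totient else 0))
        := (Finset.sum_congr rfl per).symm
    _ = (∑ H ∈ C, (Nat.card (H : Subgroup G)).totient)
          + ∑ H ∈ C, ∑ k ∈ Finset.Ico 1 N, 2 ^ (N - 1 - k) *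
            (if Nat.card (H : Subgroup G) ∣ 2 ^ k then (Nat.card (H : Subgroup G)).totient else 0)
        := Finset.sum_add_distrib
    _ = 2 ^ N + ∑ k ∈ Finset.Ico 1 N, 2 ^ (N - 1 - k) * Nat.card {g : G // g ^ 2 ^ k = 1} := by
        rw [← htop, Finset.sum_comm]
        congr 1
        refine Finset.sum_congr rfl fun k hk => ?_
        rw [ht k, Finset.mul_sum]

lemma crit {G : Type*} [CommGroup G] [Finite G] (N : ℕ) (hN : 1 ≤ N)
    (hG : Nat.card G = 2 ^ N) :
    alpha G = 1 / 2 ↔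
      (3 ≤ N ∧ Nat.card {g : G // g ^ 2 = 1} = 2 ^ (N - 2) ∧
        Nat.card {g : G // g ^ 4 = 1} = 2 ^ (N - 1) ∧ ∀ g : G, g ^ 8 = 1) := by
  haveI : Fintype G := Fintype.ofFinite G
  set K : ℕ → Subgroup G := fun k => (powMonoidHom (2 ^ k) : G →* G).ker with hK
  have hmem : ∀ k (g : G), g ∈ K k ↔ g ^ 2 ^ k = 1 := by
    intro k g; simp [hK, MonoidHom.mem_ker, powMonoidHom_apply]
  set T : ℕ → ℕ := fun k => Nat.card (K k) with hT
  have hTdef : ∀ k, Nat.card {g : G // g ^ 2 ^ k = 1} = T k := by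
    intro k
    exact Nat.card_congr (Equiv.subtypeEquivRight fun g => (hmem k g).symm)
  have hconv2 : Nat.card {g : G // g ^ 2 = 1} = T 1 := by
    rw [← hTdef 1]; exact Nat.card_congr (Equiv.subtypeEquivRight fun g => by norm_num)
  have hconv4 : Nat.card {g : G // g ^ 4 = 1} = T 2 := by
    rw [← hTdef 2]; exact Nat.card_congr (Equiv.subtypeEquivRight fun g => by norm_num)
  have hKmono : ∀ k, K k ≤ K (k + 1) := by
    intro k g hg
    rw [hmem] at hg ⊢
    rw [pow_succ, pow_mul, hg, one_pow]
  have hTmono : Monotone T :=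
    monotone_nat_of_le_succ fun k => Subgroup.card_le_of_le (hKmono k)
  have hTdvd : ∀ k, T k ∣ 2 ^ N := fun k => hG ▸ Subgroup.card_subgroup_dvd_card (K k)
  have hs' : ∀ k, ∃ j, j ≤ N ∧ T k = 2 ^ j := by
    intro k
    obtain ⟨j, hj1, hj2⟩ := (Nat.dvd_prime_pow Nat.prime_two).mp (hTdvd k)
    exact ⟨j, hj1, hj2⟩
  choose s hsle hsT using hs'
  have hT0 : T 0 = 1 := by
    have : K 0 = ⊥ := by
      ext g; rw [hmem]; simp [Subgroup.mem_bot]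
    rw [hT]; simp only; rw [this, Subgroup.card_bot]
  have hTN : T N = 2 ^ N := by
    have : K N = ⊤ := by
      ext g; rw [hmem]; simp only [Subgroup.mem_top, iff_true]
      rw [← hG]; exact pow_card_eq_one'
    rw [hT]; simp only; rw [this]; rw [← hG]; exact Subgroup.card_top
  -- stabilization
  have hstep : ∀ k, K k = K (k + 1) → K (k + 1) = K (k + 2) := by
    intro k hk
    refine le_antisymm (hKmono (k + 1)) ?_
    intro g hg
    rw [hmem] at hg ⊢
    have h1 : g ^ 2 ∈ K (k + 1) := by
      rw [hmem]
      rw [← pow_mul]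
      rw [show 2 * 2 ^ (k+1) = 2 ^ (k+2) by ring]
      exact hg
    rw [← hk, hmem] at h1
    rw [← pow_mul] at h1
    rw [show 2 * 2 ^ k = 2 ^ (k+1) by ring] at h1
    exact h1
  have hstab : ∀ k, K k = K (k + 1) → ∀ j, k ≤ j → K j = K k := by
    intro k hk j hj
    induction j with
    | zero =>
      have hk0 : k = 0 := by omega
      rw [hk0]
    | succ n ih =>
      rcases Nat.lt_or_ge k (n + 1) with h | h
      · have hn : k ≤ n := by omega
        have h1 := ih hn
        -- K (n+1) = K n : from step chain
        have hchain : ∀ i, K (k + i) = K (k + i + 1) := by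
          intro i
          induction i with
          | zero => exact hk
          | succ p ihp => exact hstep _ ihp
        have := hchain (n - k)
        rw [show k + (n - k) = n by omega] at this
        rw [← this, h1]
      · have : k = n + 1 := by omega
        rw [this]
  -- least k with T k = 2^N
  have hex : ∃ k, T k = 2 ^ N := ⟨N, hTN⟩
  set m := Nat.find hex with hmdef
  have hm : T m = 2 ^ N := Nat.find_spec hex
  have hmlt : ∀ k, k < m → T k ≠ 2 ^ N := fun k hk => Nat.find_min hex hk
  have hmle : m ≤ N := Nat.find_min' hex hTN
  have hm1 : 1 ≤ m := by
    rcases Nat.eq_zero_or_pos m with h0 | h; swap; · exact h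
    exfalso
    rw [h0] at hm
    rw [hT0] at hm
    have : 1 < 2 ^ N := Nat.one_lt_two_pow_iff.mpr (by omega)
    omega
  have hTge : ∀ k, m ≤ k → T k = 2 ^ N := by
    intro k hk
    refine le_antisymm (Nat.le_of_dvd (by positivity) (hTdvd k)) ?_
    rw [← hm]
    exact hTmono hk
  have hsgrow : ∀ k, k < m → s k < s (k + 1) := by
    intro k hk
    by_contra hcon
    push_neg at hcon
    have hle2 : T (k + 1) ≤ T k := by
      rw [hsT, hsT]
      exact Nat.pow_le_pow_right (by norm_num) hcon
    have hKeq : K k = K (k + 1) := Subgroup.eq_of_le_of_card_ge (hKmono k) hle2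
    have := hstab k hKeq m (by omega)
    have hTm : T m = T k := by rw [hT]; simp only; rw [this]
    exact hmlt k hk (by rw [← hTm, hm])
  have hbnd : ∀ i k, k + i = m → s k + i ≤ N := by
    intro i
    induction i with
    | zero => intro k hk; simpa using hsle k
    | succ n ih =>
      intro k hk
      have h1 : s k < s (k + 1) := hsgrow k (by omega)
      have h2 := ih (k + 1) (by omega)
      omega
  -- the alpha criterion
  have halpha : alpha G = 1 / 2 ↔ Nat.card {H : Subgroup G // IsCyclic H} = 2 ^ (N - 1) := by
    rw [alpha, hG]
    rw [div_eq_div_iff (by positivity) (by norm_num), one_mul]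
    rw [show (2:ℚ) = ((2:ℕ):ℚ) from by norm_num, ← Nat.cast_mul, Nat.cast_inj]
    have h4 : (2 : ℕ) ^ N = 2 ^ (N - 1) * 2 := by
      rw [← pow_succ]; congr 1; omega
    omega
  rw [halpha]
  have hID := ident N hG hN
  have hIDT : 2 ^ (N - 1) * Nat.card {H : Subgroup G // IsCyclic H}
      = 2 ^ N + ∑ k ∈ Finset.Ico 1 N, 2 ^ (N - 1 - k) * T k := by
    rw [hID]
    congr 1
  constructor
  · -- forward: the numeric analysis
    intro hcyc
    have hEQ : 2 ^ (N - 1) * 2 ^ (N - 1)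
        = 2 ^ N + ∑ k ∈ Finset.Ico 1 N, 2 ^ (N - 1 - k) * T k := by
      have h := hIDT
      rw [hcyc] at h
      exact h
    have hsplit : ∑ k ∈ Finset.Ico 1 N, 2 ^ (N - 1 - k) * T k
        = ∑ k ∈ Finset.Ico 1 m, 2 ^ (N - 1 - k) * T k
          + ∑ k ∈ Finset.Ico m N, 2 ^ (N - 1 - k) * T k := by
      rw [Finset.sum_Ico_consecutive _ hm1 hmle]
    have htail : 2 ^ N + ∑ k ∈ Finset.Ico m N, 2 ^ (N - 1 - k) * T k = 2 ^ (2 * N - m) := by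
      have h1 : ∀ k ∈ Finset.Ico m N, 2 ^ (N - 1 - k) * T k = 2 ^ N * 2 ^ (N - 1 - k) := by
        intro k hk
        rw [hTge k (Finset.mem_Ico.mp hk).1, mul_comm]
      rw [Finset.sum_congr rfl h1, ← Finset.mul_sum, geo m N]
      have h2 : 1 ≤ 2 ^ (N - m) := Nat.one_le_two_pow
      have h3 : 2 ^ N * (2 ^ (N - m) - 1) = 2 ^ N * 2 ^ (N - m) - 2 ^ N := by
        rw [Nat.mul_sub, mul_one]
      have h4 : (2:ℕ) ^ N * 2 ^ (N - m) = 2 ^ (2 * N - m) := by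
        rw [← pow_add]; congr 1; omega
      have h5 : (2:ℕ) ^ N ≤ 2 ^ (2 * N - m) := Nat.pow_le_pow_right (by norm_num) (by omega)
      omega
    have hL : 2 ^ (N - 1) * 2 ^ (N - 1) = 2 ^ (2 * N - 2) := by
      rw [← pow_add]; congr 1; omega
    have hEQ' : 2 ^ (2 * N - 2)
        = ∑ k ∈ Finset.Ico 1 m, 2 ^ (N - 1 - k) * T k + 2 ^ (2 * N - m) := by
      omega
    -- case analysis on m
    rcases Nat.lt_or_ge m 4 with hm4 | hm4
    · interval_cases m
      · -- m = 1
        exfalso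
        rw [show Finset.Ico 1 1 = (∅ : Finset ℕ) from rfl, Finset.sum_empty] at hEQ'
        have : (2:ℕ) ^ (2 * N - 2) < 2 ^ (2 * N - 1) :=
          Nat.pow_lt_pow_right (by norm_num) (by omega)
        omega
      · -- m = 2
        exfalso
        rw [show Finset.Ico 1 2 = ({1} : Finset ℕ) from rfl, Finset.sum_singleton] at hEQ'
        have hpos : 0 < 2 ^ (N - 1 - 1) * T 1 := by
          rw [hsT 1]; positivity
        have : 2 * N - 2 = 2 * N - 2 := rfl
        omega
      · -- m = 3
        have hN3 : 3 ≤ N := hmle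
        rw [show Finset.Ico 1 3 = ({1, 2} : Finset ℕ) from rfl] at hEQ'
        rw [Finset.sum_insert (by decide), Finset.sum_singleton] at hEQ'
        have e1 : 2 ^ (N - 1 - 1) * T 1 = 2 ^ (N - 2 + s 1) := by
          rw [hsT 1, ← pow_add]; congr 1
        have e2 : 2 ^ (N - 1 - 2) * T 2 = 2 ^ (N - 3 + s 2) := by
          rw [hsT 2, ← pow_add]; congr 1
        have hb1 : s 1 + 2 ≤ N := hbnd 2 1 rfl
        have hb2 : s 2 + 1 ≤ N := hbnd 1 2 rfl
        have le1 : 2 ^ (N - 2 + s 1) ≤ 2 ^ (2 * N - 4) :=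
          Nat.pow_le_pow_right (by norm_num) (by omega)
        have le2 : 2 ^ (N - 3 + s 2) ≤ 2 ^ (2 * N - 4) :=
          Nat.pow_le_pow_right (by norm_num) (by omega)
        have p1 : (2:ℕ) ^ (2 * N - 2) = 2 * 2 ^ (2 * N - 3) := by
          rw [← pow_succ']; congr 1; omega
        have p2 : (2:ℕ) ^ (2 * N - 3) = 2 * 2 ^ (2 * N - 4) := by
          rw [← pow_succ']; congr 1; omega
        rw [e1, e2] at hEQ'
        have heq1 : 2 ^ (N - 2 + s 1) = 2 ^ (2 * N - 4) := by omega
        have heq2 : 2 ^ (N - 3 + s 2) = 2 ^ (2 * N - 4) := by omega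
        have hs1 : s 1 = N - 2 := by
          have := Nat.pow_right_injective (le_refl 2) heq1
          omega
        have hs2 : s 2 = N - 1 := by
          have := Nat.pow_right_injective (le_refl 2) heq2
          omega
        have hT3 : T 3 = 2 ^ N := hTge 3 (by omega)
        refine ⟨hN3, ?_, ?_, ?_⟩
        · rw [hconv2, hsT 1, hs1]
        · rw [hconv4, hsT 2, hs2]
        · intro g
          have hKtop : K 3 = ⊤ := by
            apply Subgroup.eq_top_of_card_eq
            show T 3 = Nat.card G
            rw [hT3, hG]
          have : g ∈ K 3 := by rw [hKtop]; trivial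
          rw [hmem] at this
          norm_num at this
          exact this
    · -- m ≥ 4 : contradiction
      exfalso
      have hbound : ∀ k ∈ Finset.Ico 1 m, 2 ^ (N - 1 - k) * T k ≤ 2 ^ (2 * N - 1 - m) := by
        intro k hk
        obtain ⟨hk1, hk2⟩ := Finset.mem_Ico.mp hk
        rw [hsT k, ← pow_add]
        apply Nat.pow_le_pow_right (by norm_num)
        have := hbnd (m - k) k (by omega)
        omega
      have hsum1 : ∑ k ∈ Finset.Ico 1 m, 2 ^ (N - 1 - k) * T k ≤ (m - 1) * 2 ^ (2 * N - 1 - m) := by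
        calc ∑ k ∈ Finset.Ico 1 m, 2 ^ (N - 1 - k) * T k
            ≤ ∑ _k ∈ Finset.Ico 1 m, 2 ^ (2 * N - 1 - m) := Finset.sum_le_sum hbound
          _ = (m - 1) * 2 ^ (2 * N - 1 - m) := by
              rw [Finset.sum_const, Nat.card_Ico, smul_eq_mul]
      have h2Nm : (2:ℕ) ^ (2 * N - m) = 2 * 2 ^ (2 * N - 1 - m) := by
        rw [← pow_succ']; congr 1; omega
      have hLm : (2:ℕ) ^ (2 * N - 2) = 2 ^ (m - 1) * 2 ^ (2 * N - 1 - m) := by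
        rw [← pow_add]; congr 1; omega
      have h5 : 2 ^ (m - 1) * 2 ^ (2 * N - 1 - m) ≤ (m + 1) * 2 ^ (2 * N - 1 - m) := by
        rw [← hLm]
        have : (m + 1) * 2 ^ (2 * N - 1 - m)
            = (m - 1) * 2 ^ (2 * N - 1 - m) + 2 * 2 ^ (2 * N - 1 - m) := by
          rw [← add_mul]; congr 1; omega
        omega
      have hX : 0 < 2 ^ (2 * N - 1 - m) := by positivity
      have h6 : 2 ^ (m - 1) ≤ m + 1 := Nat.le_of_mul_le_mul_right h5 hX
      have := two_pow_big m hm4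
      omega
  · -- backward
    rintro ⟨hN3, hT1', hT2', h8⟩
    have hT1 : T 1 = 2 ^ (N - 2) := by rw [← hconv2]; exact hT1'
    have hT2 : T 2 = 2 ^ (N - 1) := by rw [← hconv4]; exact hT2'
    have hTk : ∀ k, 3 ≤ k → T k = 2 ^ N := by
      intro k hk
      rw [← hTdef k, ← hG]
      apply Nat.card_congr
      refine Equiv.subtypeUnivEquiv fun g => ?_
      have : (2:ℕ) ^ k = 8 * 2 ^ (k - 3) := by
        rw [show (8:ℕ) = 2 ^ 3 from rfl, ← pow_add]
        congr 1; omega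
      rw [this, pow_mul, h8 g, one_pow]
    have hsum : ∑ k ∈ Finset.Ico 1 N, 2 ^ (N - 1 - k) * T k
        = 2 ^ (N - 2) * 2 ^ (N - 2) + 2 ^ (N - 3) * 2 ^ (N - 1)
          + 2 ^ N * (2 ^ (N - 3) - 1) := by
      rw [← Finset.sum_Ico_consecutive _ (show 1 ≤ 3 by omega) hN3]
      rw [show Finset.Ico 1 3 = ({1, 2} : Finset ℕ) from rfl]
      rw [Finset.sum_insert (by decide), Finset.sum_singleton]
      have h1 : ∀ k ∈ Finset.Ico 3 N, 2 ^ (N - 1 - k) * T k = 2 ^ N * 2 ^ (N - 1 - k) := by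
        intro k hk
        rw [hTk k (Finset.mem_Ico.mp hk).1, mul_comm]
      rw [Finset.sum_congr rfl h1, ← Finset.mul_sum, geo 3 N]
      rw [hT1, hT2, show N - 1 - 1 = N - 2 from by omega, show N - 1 - 2 = N - 3 from by omega]
    have hval : 2 ^ N + ∑ k ∈ Finset.Ico 1 N, 2 ^ (N - 1 - k) * T k
        = 2 ^ (N - 1) * 2 ^ (N - 1) := by
      rw [hsum]
      have e1 : (2:ℕ) ^ (N - 2) * 2 ^ (N - 2) = 2 ^ (2 * N - 4) := by
        rw [← pow_add]; congr 1; omega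
      have e2 : (2:ℕ) ^ (N - 3) * 2 ^ (N - 1) = 2 ^ (2 * N - 4) := by
        rw [← pow_add]; congr 1; omega
      have e3 : (2:ℕ) ^ N * (2 ^ (N - 3) - 1) = 2 ^ (2 * N - 3) - 2 ^ N := by
        rw [Nat.mul_sub, mul_one, ← pow_add]; congr 2; omega
      have e4 : (2:ℕ) ^ (N - 1) * 2 ^ (N - 1) = 2 ^ (2 * N - 2) := by
        rw [← pow_add]; congr 1; omega
      have p1 : (2:ℕ) ^ (2 * N - 2) = 2 * 2 ^ (2 * N - 3) := by
        rw [← pow_succ']; congr 1; omega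
      have p2 : (2:ℕ) ^ (2 * N - 3) = 2 * 2 ^ (2 * N - 4) := by
        rw [← pow_succ']; congr 1; omega
      have p3 : (2:ℕ) ^ N ≤ 2 ^ (2 * N - 3) := Nat.pow_le_pow_right (by norm_num) (by omega)
      omega
    have : 2 ^ (N - 1) * Nat.card {H : Subgroup G // IsCyclic H}
        = 2 ^ (N - 1) * 2 ^ (N - 1) := by rw [hIDT, hval]
    exact Nat.eq_of_mul_eq_mul_left (by positivity) this


lemma tcount_congr {G G' : Type*} [Group G] [Group G'] (e : G ≃* G') (m : ℕ) :
    Nat.card {g : G // g ^ m = 1} = Nat.card {g' : G' // g' ^ m = 1} := by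
  apply Nat.card_congr
  refine Equiv.subtypeEquiv e.toEquiv fun g => ?_
  show g ^ m = 1 ↔ (e g) ^ m = 1
  rw [← map_pow, EmbeddingLike.map_eq_one_iff]

lemma alpha_congr {G G' : Type*} [Group G] [Group G'] (e : G ≃* G') :
    alpha G = alpha G' := by
  have hcomp : ∀ (H : Subgroup G), (H.map e.toMonoidHom).map e.symm.toMonoidHom = H := by
    intro H
    rw [Subgroup.map_map]
    have : (e.symm.toMonoidHom.comp e.toMonoidHom) = MonoidHom.id G := by
      ext x; simp
    rw [this, Subgroup.map_id]
  have hcomp' : ∀ (H' : Subgroup G'), (H'.map e.symm.toMonoidHom).map e.toMonoidHom = H' := by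
    intro H'
    rw [Subgroup.map_map]
    have : (e.toMonoidHom.comp e.symm.toMonoidHom) = MonoidHom.id G' := by
      ext x; simp
    rw [this, Subgroup.map_id]
  have hcyc : Nat.card {H : Subgroup G // IsCyclic H}
      = Nat.card {H' : Subgroup G' // IsCyclic H'} := by
    apply Nat.card_congr
    refine
      { toFun := fun H => ⟨H.1.map e.toMonoidHom, ?_⟩
        invFun := fun H' => ⟨H'.1.map e.symm.toMonoidHom, ?_⟩
        left_inv := fun H => Subtype.ext (hcomp H.1)
        right_inv := fun H' => Subtype.ext (hcomp' H'.1) }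
    · haveI := H.2
      exact isCyclic_of_surjective (e.subgroupMap H.1) (e.subgroupMap H.1).surjective
    · haveI := H'.2
      exact isCyclic_of_surjective (e.symm.subgroupMap H'.1) (e.symm.subgroupMap H'.1).surjective
  rw [alpha, alpha, hcyc, Nat.card_congr e.toEquiv]

lemma model_iso {ι : Type*} [Fintype ι] [DecidableEq ι] (nn : ι → ℕ) (i0 : ι)
    (h0 : nn i0 = 8) (h2 : ∀ i, i ≠ i0 → nn i = 2) :
    ∃ n : ℕ, Nonempty ((∀ i, Multiplicative (ZMod (nn i))) ≃*
      Multiplicative ((Fin n → ZMod 2) × ZMod 8)) := by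
  refine ⟨Fintype.card {j // j ≠ i0}, ⟨?_⟩⟩
  have e1 : (∀ i, Multiplicative (ZMod (nn i))) ≃*
      Multiplicative (ZMod (nn i0)) × (∀ j : {j // j ≠ i0}, Multiplicative (ZMod (nn j))) :=
    { Equiv.piSplitAt i0 (fun i => Multiplicative (ZMod (nn i))) with
      map_mul' := fun f g => rfl }
  have eA : Multiplicative (ZMod (nn i0)) ≃* Multiplicative (ZMod 8) :=
    AddEquiv.toMultiplicative (ZMod.ringEquivCongr h0).toAddEquiv
  have eB0 : (∀ j : {j // j ≠ i0}, Multiplicative (ZMod (nn j))) ≃*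
      (∀ _j : {j // j ≠ i0}, Multiplicative (ZMod 2)) :=
    MulEquiv.piCongrRight fun j =>
      AddEquiv.toMultiplicative (ZMod.ringEquivCongr (h2 j j.2)).toAddEquiv
  have eB1 : (∀ _j : {j // j ≠ i0}, Multiplicative (ZMod 2)) ≃*
      (Fin (Fintype.card {j // j ≠ i0}) → Multiplicative (ZMod 2)) :=
    MulEquiv.arrowCongr (Fintype.equivFin _) (MulEquiv.refl _)
  have efin : (Fin (Fintype.card {j // j ≠ i0}) → Multiplicative (ZMod 2)) ≃*
      Multiplicative (Fin (Fintype.card {j // j ≠ i0}) → ZMod 2) :=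
    (MulEquiv.piMultiplicative fun _ => ZMod 2).symm
  have elast : Multiplicative (Fin (Fintype.card {j // j ≠ i0}) → ZMod 2)
        × Multiplicative (ZMod 8) ≃*
      Multiplicative ((Fin (Fintype.card {j // j ≠ i0}) → ZMod 2) × ZMod 8) :=
    (MulEquiv.prodMultiplicative _ _).symm
  exact e1.trans (((eA.prodCongr (eB0.trans (eB1.trans efin)))).trans
    (MulEquiv.prodComm.trans elast))

lemma pow_eq_one_iff_smul {A : Type*} [AddGroup A] (g : Multiplicative A) (m : ℕ) :
    g ^ m = 1 ↔ m • g.toAdd = 0 := by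
  constructor
  · intro h
    have := congrArg Multiplicative.toAdd h
    simpa using this
  · intro h
    have := congrArg Multiplicative.ofAdd h
    simpa using this

-- counting in a finite product of groups
lemma count_pi {ι : Type*} [Fintype ι] (K : ι → Type*) [∀ i, Group (K i)] (m : ℕ) :
    Nat.card {g : ∀ i, K i // g ^ m = 1} = ∏ i, Nat.card {x : K i // x ^ m = 1} := by
  rw [← Nat.card_pi]
  apply Nat.card_congr
  refine (Equiv.subtypeEquivRight ?_).trans (Equiv.subtypePiEquivPi)
  intro g
  rw [funext_iff]
  apply forall_congr'
  intro i
  simp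

lemma count_zmod_filter (c m : ℕ) [NeZero c] :
    Nat.card {x : Multiplicative (ZMod c) // x ^ m = 1}
      = (univ.filter fun y : ZMod c => m • y = 0).card := by
  have e : {x : Multiplicative (ZMod c) // x ^ m = 1} ≃ {y : ZMod c // m • y = 0} :=
    Equiv.subtypeEquiv Multiplicative.toAdd fun x => pow_eq_one_iff_smul x m
  rw [Nat.card_congr e, Nat.card_eq_fintype_card, Fintype.card_subtype]

lemma count_sq (c : ℕ) (hc : c = 2 ∨ c = 4 ∨ c = 8) :
    Nat.card {x : Multiplicative (ZMod c) // x ^ 2 = 1} = 2 := by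
  rcases hc with rfl | rfl | rfl <;> rw [count_zmod_filter] <;> decide



lemma zmod_smul_zero (c m : ℕ) (h : c ∣ m) (y : ZMod c) : m • y = 0 := by
  rw [nsmul_eq_mul, (ZMod.natCast_eq_zero_iff m c).mpr h, zero_mul]

lemma count_prod {K L : Type*} [Group K] [Group L] (m : ℕ) :
    Nat.card {g : K × L // g ^ m = 1}
      = Nat.card {k : K // k ^ m = 1} * Nat.card {l : L // l ^ m = 1} := by
  rw [← Nat.card_prod]
  apply Nat.card_congr
  refine (Equiv.subtypeEquivRight ?_).trans Equiv.subtypeProdEquivProd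
  intro g
  rw [Prod.ext_iff]
  simp

lemma card_mult_zmod (c : ℕ) : Nat.card (Multiplicative (ZMod c)) = c := by
  rw [Nat.card_congr Multiplicative.toAdd, Nat.card_zmod]

lemma card_target (n : ℕ) :
    Nat.card (Multiplicative ((Fin n → ZMod 2) × ZMod 8)) = 2 ^ (n + 3) := by
  rw [Nat.card_congr Multiplicative.toAdd, Nat.card_prod, Nat.card_pi]
  simp only [Nat.card_zmod, Finset.prod_const, Finset.card_univ, Fintype.card_fin]
  rw [pow_add]
  norm_num

lemma alpha_target (n : ℕ) :
    alpha (Multiplicative ((Fin n → ZMod 2) × ZMod 8)) = 1 / 2 := by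
  rw [crit (n + 3) (by omega) (card_target n)]
  set Mt := Multiplicative ((Fin n → ZMod 2) × ZMod 8) with hMt
  have ecnt : ∀ m : ℕ,
      Nat.card {g : Mt // g ^ m = 1}
        = (∏ _i : Fin n, Nat.card {x : Multiplicative (ZMod 2) // x ^ m = 1})
          * Nat.card {x : Multiplicative (ZMod 8) // x ^ m = 1} := by
    intro m
    rw [tcount_congr (MulEquiv.prodMultiplicative _ _) m, count_prod m]
    congr 1
    rw [tcount_congr (MulEquiv.piMultiplicative fun _ : Fin n => ZMod 2) m, count_pi]
  refine ⟨by omega, ?_, ?_, ?_⟩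
  · rw [ecnt 2]
    have h1 : ∀ _i : Fin n, Nat.card {x : Multiplicative (ZMod 2) // x ^ 2 = 1} = 2 :=
      fun _ => count_sq 2 (Or.inl rfl)
    rw [Finset.prod_congr rfl (fun i _ => h1 i), Finset.prod_const, Finset.card_univ,
      Fintype.card_fin]
    rw [show Nat.card {x : Multiplicative (ZMod 8) // x ^ 2 = 1} = 2 from by
      rw [count_zmod_filter]; decide]
    rw [show n + 3 - 2 = n + 1 from by omega, pow_succ]
  · rw [ecnt 4]
    have h1 : ∀ _i : Fin n, Nat.card {x : Multiplicative (ZMod 2) // x ^ 4 = 1} = 2 :=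
      fun _ => by rw [count_zmod_filter]; decide
    rw [Finset.prod_congr rfl (fun i _ => h1 i), Finset.prod_const, Finset.card_univ,
      Fintype.card_fin]
    rw [show Nat.card {x : Multiplicative (ZMod 8) // x ^ 4 = 1} = 4 from by
      rw [count_zmod_filter]; decide]
    rw [show n + 3 - 1 = n + 2 from by omega]
    rw [show (4:ℕ) = 2 * 2 from rfl, ← mul_assoc, ← pow_succ, ← pow_succ]
  · intro g
    rw [pow_eq_one_iff_smul]
    refine Prod.ext ?_ ?_
    · show (8 • g.toAdd.1) = 0
      funext i
      exact zmod_smul_zero 2 8 (by norm_num) _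
    · exact zmod_smul_zero 8 8 dvd_rfl _

theorem stmt_16 (G : Type*) [CommGroup G] [Finite G] (h2 : IsPGroup 2 G) :
    alpha G = 1 / 2 ↔
      ∃ n : ℕ, Nonempty (G ≃* Multiplicative ((Fin n → ZMod 2) × ZMod 8)) := by
  haveI : Fact (Nat.Prime 2) := ⟨Nat.prime_two⟩
  constructor
  · intro ha
    obtain ⟨N, hG⟩ := IsPGroup.exists_card_eq h2
    rcases Nat.eq_zero_or_pos N with rfl | hN
    · exfalso
      rw [pow_zero] at hG
      haveI hsub : Subsingleton G := (Nat.card_eq_one_iff_unique.mp hG).1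
      have hsubgrp : ∀ H : Subgroup G, H = ⊥ := by
        intro H
        ext x
        have hx : x = 1 := Subsingleton.elim x 1
        simp only [hx, Subgroup.mem_bot]
        simp [H.one_mem]
      have h1 : Nat.card {H : Subgroup G // IsCyclic H} = 1 := by
        apply Nat.card_eq_one_iff_unique.mpr
        constructor
        · constructor
          intro a b
          apply Subtype.ext
          rw [hsubgrp a.1, hsubgrp b.1]
        · exact ⟨⟨⊥, inferInstance⟩⟩
      rw [alpha, h1, hG] at ha
      norm_num at ha
    · obtain ⟨ι, hfin, nn, h1, ⟨e⟩⟩ := CommGroup.equiv_prod_multiplicative_zmod_of_finite G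
      classical
      haveI : ∀ i, NeZero (nn i) := fun i => ⟨by have := h1 i; omega⟩
      set M := ∀ i, Multiplicative (ZMod (nn i)) with hM
      haveI : Finite M := by
        haveI : ∀ i, Finite (Multiplicative (ZMod (nn i))) := fun i => by
          show Finite (ZMod (nn i)); infer_instance
        infer_instance
      have hcardM : Nat.card M = 2 ^ N := by rw [← Nat.card_congr e.toEquiv, hG]
      have haM : alpha M = 1 / 2 := by rw [← alpha_congr e, ha]
      obtain ⟨hN3, hc2, hc4, h8⟩ := (crit N hN hcardM).mp haM
      -- each nn i divides 8
      have hfac8 : ∀ i (x : Multiplicative (ZMod (nn i))), x ^ 8 = 1 := by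
        intro i x
        have hx := h8 (Pi.mulSingle i x)
        have hx2 := congrFun hx i
        rw [Pi.pow_apply, Pi.mulSingle_eq_same] at hx2
        exact hx2
      have hdvd8 : ∀ i, nn i ∣ 8 := by
        intro i
        have hx := hfac8 i (Multiplicative.ofAdd 1)
        rw [pow_eq_one_iff_smul] at hx
        simp only [toAdd_ofAdd] at hx
        rwa [nsmul_eq_mul, mul_one, ZMod.natCast_eq_zero_iff] at hx
      have hmem : ∀ i, nn i = 2 ∨ nn i = 4 ∨ nn i = 8 := by
        intro i
        have hd := hdvd8 i
        have h1i := h1 i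
        have hle : nn i ≤ 8 := Nat.le_of_dvd (by norm_num) hd
        interval_cases h : (nn i) <;> revert hd <;> decide
      -- card of index type
      have hcount2 : Nat.card {g : M // g ^ 2 = 1} = 2 ^ Fintype.card ι := by
        rw [count_pi]
        rw [Finset.prod_congr rfl (fun i _ => count_sq (nn i) (hmem i)), Finset.prod_const,
          Finset.card_univ]
      have hcardι : Fintype.card ι = N - 2 := by
        rw [hcount2] at hc2
        exact Nat.pow_right_injective (le_refl 2) hc2
      have hprod : ∏ i, nn i = 2 ^ N := by
        rw [← hcardM, hM, Nat.card_pi]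
        exact Finset.prod_congr rfl fun i _ => (card_mult_zmod (nn i)).symm
      -- existence of a factor of order 8
      have hex8 : ∃ i0, nn i0 = 8 := by
        by_contra hcon
        push_neg at hcon
        have hall4 : ∀ g : M, g ^ 4 = 1 := by
          intro g
          funext i
          rw [Pi.pow_apply, Pi.one_apply, pow_eq_one_iff_smul]
          apply zmod_smul_zero
          rcases hmem i with h | h | h
          · rw [h]; norm_num
          · rw [h]
          · exact absurd h (hcon i)
        have hfull : Nat.card {g : M // g ^ 4 = 1} = 2 ^ N := by
          rw [← hcardM]
          exact Nat.card_congr (Equiv.subtypeUnivEquiv hall4)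
        rw [hc4] at hfull
        have := Nat.pow_right_injective (le_refl 2) hfull
        omega
      obtain ⟨i0, hi0⟩ := hex8
      have h8prod : 8 * ∏ i ∈ Finset.univ.erase i0, nn i = 2 ^ N := by
        rw [← hi0, Finset.mul_prod_erase Finset.univ nn (Finset.mem_univ i0), hprod]
      have hrest : ∏ i ∈ Finset.univ.erase i0, nn i = 2 ^ (N - 3) := by
        have hp : (2:ℕ) ^ N = 8 * 2 ^ (N - 3) := by
          rw [show (8:ℕ) = 2 ^ 3 from rfl, ← pow_add]
          congr 1; omega
        rw [hp] at h8prod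
        exact Nat.eq_of_mul_eq_mul_left (by norm_num) h8prod
      have hcarderase : (Finset.univ.erase i0).card = N - 3 := by
        rw [Finset.card_erase_of_mem (Finset.mem_univ i0), Finset.card_univ, hcardι]
        omega
      have h2' : ∀ i, i ≠ i0 → nn i = 2 := by
        intro i hi
        refine prod_eq_two_pow_card (Finset.univ.erase i0) nn
          (fun j _ => by rcases hmem j with h | h | h <;> omega)
          (by rw [hcarderase, hrest]) i ?_
        simp [hi]
      obtain ⟨n, ⟨eM⟩⟩ := model_iso nn i0 hi0 h2'
      exact ⟨n, ⟨e.trans eM⟩⟩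
  · rintro ⟨n, ⟨e⟩⟩
    rw [alpha_congr e]
    exact alpha_target n
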